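/- Let (P,≤) be a poset, U and U′ up-sets in P, and k a field. Then Hom(k[U′], k[U]) is isomorphic to k^{S}, where S is the set of connected components of U′ that are contained in U. -/

import Mathlib

open CategoryTheory

noncomputable section
attribute [local instance] Classical.propDecidable
set_option linter.unusedSectionVars false

variable (R : Type) [Ring R] {P : Type} [Preorder P]

/-- Condition that a subset is order-convex. -/
def IsConvexSet (I : Set P) : Prop := ∀ ⦃x y z : P⦄, x ∈ I → z ∈ I → x ≤ y → y ≤ z → y ∈ I

/-- The value of the interval persistence module at a point. -/
def intervalObj (I : Set P) (a : P) : Submodule R R :=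
  if a ∈ I then (⊤ : Submodule R R) else ⊥

lemma intervalObj_eq_zero {I : Set P} {a : P} (h : a ∉ I) (x : intervalObj R I a) :
    x = 0 := by
  have hx := x.2
  simp only [intervalObj, if_neg h, Submodule.mem_bot] at hx
  exact Subtype.ext hx

/-- The structure map of the interval module between two degrees. -/
def intervalMapAux (I : Set P) (a b : P) :
    (intervalObj R I a) →ₗ[R] (intervalObj R I b) :=
  if h : a ∈ I ∧ b ∈ I then
    Submodule.inclusion (by simp [intervalObj, h.1, h.2])
  else 0

lemma intervalMapAux_coe {I : Set P} {a b : P} (ha : a ∈ I) (hb : b ∈ I)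
    (x : intervalObj R I a) : ((intervalMapAux R I a b x : R)) = (x : R) := by
  simp [intervalMapAux, ha, hb]

lemma intervalMapAux_of_not {I : Set P} {a b : P} (h : ¬(a ∈ I ∧ b ∈ I))
    (x : intervalObj R I a) : intervalMapAux R I a b x = 0 := by
  simp [intervalMapAux, h]

/-- The interval (indicator) persistence module of a convex set `I`,
as a functor from the preorder `P` to `R`-modules. -/
def intervalModule (I : Set P) (hI : IsConvexSet I) : P ⥤ ModuleCat R where
  obj a := ModuleCat.of R (intervalObj R I a)
  map {a b} f := ModuleCat.ofHom (intervalMapAux R I a b)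
  map_id a := by
    apply ModuleCat.hom_ext
    apply LinearMap.ext
    intro x
    by_cases h : a ∈ I
    · exact Subtype.ext (intervalMapAux_coe R h h x)
    · rw [intervalObj_eq_zero R h x]
      simp
  map_comp {a b c} f g := by
    apply ModuleCat.hom_ext
    apply LinearMap.ext
    intro x
    show intervalMapAux R I a c x = intervalMapAux R I b c (intervalMapAux R I a b x)
    by_cases ha : a ∈ I
    · by_cases hc : c ∈ I
      · have hb : b ∈ I := hI ha hc (leOfHom f) (leOfHom g)
        apply Subtype.ext
        rw [intervalMapAux_coe R ha hc, intervalMapAux_coe R hb hc,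
          intervalMapAux_coe R ha hb]
      · rw [intervalMapAux_of_not R (fun h => hc h.2),
          intervalMapAux_of_not R (fun h => hc h.2)]
    · rw [intervalObj_eq_zero R ha x]
      simp

end

lemma IsConvexSet.of_ordConnected {P : Type} [Preorder P] {s : Set P}
    (h : s.OrdConnected) : IsConvexSet s :=
  fun _ _ _ hx hz hxy hyz => h.out hx hz ⟨hxy, hyz⟩

/-- The zigzag (comparability) setoid on a subset of a preordered set: the equivalence
relation generated by comparability within the subset. -/
def zigzagSetoid {P : Type} [Preorder P] (S : Set P) : Setoid S :=
  Relation.EqvGen.setoid (fun x y : S => (x : P) ≤ y ∨ (y : P) ≤ x)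

/-- The set of zigzag-connected components of a subset of a preordered set. -/
def pi0 {P : Type} [Preorder P] (S : Set P) : Type :=
  Quotient (zigzagSetoid S)

/- ======================== auxiliary development ======================== -/

namespace HomUpsetAux

open CategoryTheory

noncomputable section
attribute [local instance] Classical.propDecidable

variable (k : Type) [Field k] {P : Type} [PartialOrder P] (U U' : Set P)

/-- The canonical generator of the interval module at a point of `I`. -/
def oneEl {I : Set P} {a : P} (ha : a ∈ I) : intervalObj k I a :=
  ⟨1, by simp [intervalObj, ha]⟩

lemma smul_oneEl {I : Set P} {a : P} (ha : a ∈ I) (x : intervalObj k I a) :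
    (x : k) • oneEl k ha = x := Subtype.ext (by simp [oneEl])

variable (hU : IsUpperSet U) (hU' : IsUpperSet U')

local notation "M'" => intervalModule k U' (fun _ _ _ hx _ hxy _ => hU' hxy hx)
local notation "M" => intervalModule k U (fun _ _ _ hx _ hxy _ => hU hxy hx)

/-- The scalar by which a natural transformation acts at a point of `U'`. -/
def value (η : M' ⟶ M) (a : U') : k :=
  (η.app (a : P) (oneEl k a.2)).1

lemma value_zero (η : M' ⟶ M) (a : U') (haU : (a : P) ∉ U) : value k U U' hU hU' η a = 0 := by
  unfold value
  rw [show (η.app (a : P) (oneEl k a.2)) = 0 from intervalObj_eq_zero k haU _]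
  rfl

lemma value_comparable (η : M' ⟶ M) (a b : U') (hab : (a : P) ≤ b) :
    value k U U' hU hU' η a = value k U U' hU hU' η b := by
  have hnat := congrArg (fun (f : (M').obj (a : P) ⟶ (M).obj (b : P)) => f (oneEl k a.2))
    (η.naturality (homOfLE hab))
  have hsrc : intervalMapAux k U' (a : P) (b : P) (oneEl k a.2) = oneEl k b.2 :=
    Subtype.ext (intervalMapAux_coe k a.2 b.2 (oneEl k a.2))
  have hnat' : η.app (b : P) (oneEl k b.2) =
      intervalMapAux k U (a : P) (b : P) (η.app (a : P) (oneEl k a.2)) := by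
    have : η.app (b : P) (intervalMapAux k U' (a : P) (b : P) (oneEl k a.2)) =
        intervalMapAux k U (a : P) (b : P) (η.app (a : P) (oneEl k a.2)) := by
      erw [ConcreteCategory.comp_apply, ConcreteCategory.comp_apply] at hnat
      exact hnat
    rwa [hsrc] at this
  by_cases haU : (a : P) ∈ U
  · have hbU : (b : P) ∈ U := hU hab haU
    unfold value
    rw [show (η.app (b : P) (oneEl k b.2)).1 = ((intervalMapAux k U (a : P) (b : P) (η.app (a : P) (oneEl k a.2))) : k) from congrArg Subtype.val hnat']
    exact (intervalMapAux_coe k haU hbU _).symm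
  · rw [value_zero k U U' hU hU' η a haU]
    have h0 : η.app (a : P) (oneEl k a.2) = 0 := intervalObj_eq_zero k haU _
    unfold value
    rw [show (η.app (b : P) (oneEl k b.2)).1 = ((intervalMapAux k U (a : P) (b : P) (η.app (a : P) (oneEl k a.2))) : k) from congrArg Subtype.val hnat',
      h0]
    exact (congrArg Subtype.val (intervalMapAux k U (a : P) (b : P)).map_zero).symm

lemma value_const (η : M' ⟶ M) (a b : U')
    (h : Quotient.mk (zigzagSetoid U') a = Quotient.mk (zigzagSetoid U') b) :
    value k U U' hU hU' η a = value k U U' hU hU' η b := by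
  have h' : Relation.EqvGen (fun x y : U' => (x : P) ≤ y ∨ (y : P) ≤ x) a b :=
    Quotient.exact h
  clear h
  induction h' with
  | rel x y hxy =>
    rcases hxy with h1 | h1
    · exact value_comparable k U U' hU hU' η x y h1
    · exact (value_comparable k U U' hU hU' η y x h1).symm
  | refl x => rfl
  | symm x y _ ih => exact ih.symm
  | trans x y z _ _ ih1 ih2 => exact ih1.trans ih2

/-- The condition that a component is contained in `U`. -/
def condC (C : pi0 U') : Prop :=
  ∀ x : U', Quotient.mk (zigzagSetoid U') x = C → (x : P) ∈ U

/-- The scalar of a function on components, as a function on `pi0`. -/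
def cOn (g : {C : pi0 U' // condC U U' C} → k) (C : pi0 U') : k :=
  if h : condC U U' C then g ⟨C, h⟩ else 0

/-- The scalar field of a function on components. -/
def cfun (g : {C : pi0 U' // condC U U' C} → k) (a : P) : k :=
  if h : a ∈ U' then cOn k U U' g (Quotient.mk (zigzagSetoid U') ⟨a, h⟩) else 0

lemma cfun_eq (g : {C : pi0 U' // condC U U' C} → k) {a b : P} (ha : a ∈ U') (hb : b ∈ U')
    (h : Quotient.mk (zigzagSetoid U') (⟨a, ha⟩ : U') = Quotient.mk (zigzagSetoid U') ⟨b, hb⟩) :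
    cfun k U U' g a = cfun k U U' g b := by
  unfold cfun
  rw [dif_pos ha, dif_pos hb, h]

lemma cfun_zero (g : {C : pi0 U' // condC U U' C} → k) {a : P} (ha : a ∈ U') (haU : a ∉ U) :
    cfun k U U' g a = 0 := by
  unfold cfun cOn
  rw [dif_pos ha, dif_neg]
  intro h2
  exact haU (h2 ⟨a, ha⟩ rfl)

/-- The transfer map between interval modules of `U'` and `U`. -/
def tmap (a : P) : (intervalObj k U' a) →ₗ[k] (intervalObj k U a) :=
  if h : (a ∈ U' → a ∈ U) then
    Submodule.inclusion (by
      by_cases ha : a ∈ U'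
      · simp [intervalObj, ha, h ha]
      · simp only [intervalObj, if_neg ha]
        exact bot_le)
  else 0

lemma tmap_coe {a : P} (h : a ∈ U' → a ∈ U) (x : intervalObj k U' a) :
    ((tmap k U U' a x : k)) = (x : k) := by
  unfold tmap
  rw [dif_pos h]
  rfl

lemma tmap_of_not {a : P} (h : ¬(a ∈ U' → a ∈ U)) : tmap k U U' a = 0 := by
  simp [tmap, h]

/-- The natural transformation built from a function on components. -/
def mkHom (g : {C : pi0 U' // condC U U' C} → k) : M' ⟶ M where
  app a := ModuleCat.ofHom (cfun k U U' g a • tmap k U U' a)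
  naturality {a b} f := by
    have hab : a ≤ b := leOfHom f
    ext x
    show (cfun k U U' g b • tmap k U U' b) (intervalMapAux k U' a b x) =
      intervalMapAux k U a b ((cfun k U U' g a • tmap k U U' a) x)
    by_cases ha : a ∈ U'
    · have hb : b ∈ U' := hU' hab ha
      have hq : Quotient.mk (zigzagSetoid U') (⟨a, ha⟩ : U') =
          Quotient.mk (zigzagSetoid U') ⟨b, hb⟩ :=
        Quot.sound (Relation.EqvGen.rel _ _ (Or.inl hab))
      apply Subtype.ext
      show ((cfun k U U' g b • tmap k U U' b) (intervalMapAux k U' a b x) : k) =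
        ((intervalMapAux k U a b ((cfun k U U' g a • tmap k U U' a) x)) : k)
      by_cases haU : a ∈ U
      · have hbU : b ∈ U := hU hab haU
        rw [intervalMapAux_coe k haU hbU]
        show cfun k U U' g b * ((tmap k U U' b (intervalMapAux k U' a b x)) : k) =
          cfun k U U' g a * ((tmap k U U' a x) : k)
        erw [tmap_coe k U U' (fun _ => hbU), tmap_coe k U U' (fun _ => haU),
          intervalMapAux_coe k ha hb, cfun_eq k U U' g ha hb hq]
      · have ht : tmap k U U' a = 0 := tmap_of_not k U U' (fun h => haU (h ha))
        rw [ht]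
        simp only [smul_zero]
        erw [LinearMap.zero_apply, map_zero]
        show cfun k U U' g b * ((tmap k U U' b (intervalMapAux k U' a b x)) : k) = (0 : k)
        have hc : cfun k U U' g b = 0 := by
          rw [← cfun_eq k U U' g ha hb hq]
          exact cfun_zero k U U' g ha haU
        rw [hc, zero_mul]
    · rw [intervalObj_eq_zero k ha x]
      simp

/-- The value of `mkHom` recovers `g`. -/
lemma value_mkHom (g : {C : pi0 U' // condC U U' C} → k)
    (C : {C : pi0 U' // condC U U' C}) :
    value k U U' hU hU' (mkHom k U U' hU hU' g) (Quotient.out C.1) = g C := by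
  set a : U' := Quotient.out C.1 with hadef
  have hout : Quotient.mk (zigzagSetoid U') a = C.1 := Quotient.out_eq C.1
  have haU : (a : P) ∈ U := C.2 a hout
  unfold value
  show (((cfun k U U' g (a : P) • tmap k U U' (a : P)) (oneEl k a.2)) : k) = g C
  show cfun k U U' g (a : P) * ((tmap k U U' (a : P) (oneEl k a.2)) : k) = g C
  rw [tmap_coe k U U' (fun _ => haU)]
  show cfun k U U' g (a : P) * (1 : k) = g C
  rw [mul_one]
  unfold cfun cOn
  rw [dif_pos a.2]
  have heq : (⟨(a : P), a.2⟩ : U') = a := rfl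
  rw [heq, hout, dif_pos C.2]

/-- Key: the scalar function of a hom, evaluated pointwise. -/
lemma cfun_value (η : M' ⟶ M) {a : P} (ha : a ∈ U') :
    cfun k U U' (fun C => value k U U' hU hU' η (Quotient.out C.1)) a =
      value k U U' hU hU' η ⟨a, ha⟩ := by
  unfold cfun cOn
  rw [dif_pos ha]
  by_cases h2 : condC U U' (Quotient.mk (zigzagSetoid U') (⟨a, ha⟩ : U'))
  · rw [dif_pos h2]
    exact value_const k U U' hU hU' η _ _
      (Quotient.out_eq (Quotient.mk (zigzagSetoid U') (⟨a, ha⟩ : U')))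
  · rw [dif_neg h2]
    unfold condC at h2
    push_neg at h2
    obtain ⟨y, hy, hyU⟩ := h2
    rw [value_const k U U' hU hU' η ⟨a, ha⟩ y hy.symm]
    exact (value_zero k U U' hU hU' η y hyU).symm

lemma mkHom_value (η : M' ⟶ M) :
    mkHom k U U' hU hU' (fun C => value k U U' hU hU' η (Quotient.out C.1)) = η := by
  apply NatTrans.ext
  funext a
  apply ModuleCat.hom_ext
  apply LinearMap.ext
  intro x
  show (cfun k U U' (fun C => value k U U' hU hU' η (Quotient.out C.1)) a
      • tmap k U U' a) x = η.app a x
  by_cases ha : a ∈ U'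
  · rw [cfun_value k U U' hU hU' η ha]
    have hx : x = x.1 • oneEl k ha := (smul_oneEl k ha x).symm
    apply Subtype.ext
    show value k U U' hU hU' η ⟨a, ha⟩ * (tmap k U U' a x).1 = (η.app a x).1
    by_cases haU : a ∈ U
    · erw [tmap_coe k U U' (fun _ => haU)]
      have h2 : η.app a x = x.1 • η.app a (oneEl k ha) := by
        conv_lhs => rw [← smul_oneEl k ha x]
        exact (η.app a).hom.map_smul _ _
      erw [h2, Submodule.coe_smul, mul_comm]
      rfl
    · rw [tmap_of_not k U U' (fun h => haU (h ha))]
      have h0 : η.app a x = 0 := intervalObj_eq_zero k haU _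
      rw [h0]
      erw [LinearMap.zero_apply]
      simp
      rfl
  · rw [intervalObj_eq_zero k ha x]
    exact ((cfun k U U' _ a • tmap k U U' a).map_zero).trans ((η.app a).hom.map_zero).symm

end

end HomUpsetAux

open CategoryTheory in
/-- For up-sets `U'` and `U` in a poset, `Hom(k[U'], k[U])` is isomorphic to the space
of `k`-valued functions on the set of connected components of `U'` that are contained
in `U`. -/
theorem hom_upset_upset (k : Type) [Field k] {P : Type} [PartialOrder P]
    (U U' : Set P) (hU : IsUpperSet U) (hU' : IsUpperSet U') :
    Nonempty ((intervalModule k U' (fun _ _ _ hx _ hxy _ => hU' hxy hx) ⟶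
        intervalModule k U (fun _ _ _ hx _ hxy _ => hU hxy hx)) ≃ₗ[k]
      ({C : pi0 U' // ∀ x : U', Quotient.mk (zigzagSetoid U') x = C → (x : P) ∈ U} → k)) := by
  refine ⟨{
    toFun := fun η C => HomUpsetAux.value k U U' hU hU' η (Quotient.out C.1)
    map_add' := ?_
    map_smul' := ?_
    invFun := fun g => HomUpsetAux.mkHom k U U' hU hU' g
    left_inv := ?_
    right_inv := ?_ }⟩
  · intro η η'
    funext C
    show HomUpsetAux.value k U U' hU hU' (η + η') (Quotient.out C.1) = _
    unfold HomUpsetAux.value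
    show ((η + η').app _ _).1 = _
    rw [NatTrans.app_add]
    rfl
  · intro c η
    funext C
    show HomUpsetAux.value k U U' hU hU' (c • η) (Quotient.out C.1) = _
    unfold HomUpsetAux.value
    show ((c • η).app _ _).1 = _
    rw [NatTrans.app_smul]
    rfl
  · intro η
    exact HomUpsetAux.mkHom_value k U U' hU hU' η
  · intro g
    funext C
    exact HomUpsetAux.value_mkHom k U U' hU hU' g C
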